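/- Let κ₁ > 0, κ₂ > 0, χ > 0, γ > 0, ρ₂ > 0 be real numbers, set κ = κ₁ + κ₂, and let the 2×2 matrices of the active OPO decomposition be A = diag(−κ/2 + χ, −κ/2 − χ), B₁ = C₁ = √κ₂·I, B₂ = C₂ = √κ₁·I, D₁ = D₂ = −I, H₁ = χ·I, E₁ = I (so that G = D₁ᵀD₁ = I and Γ = D₂D₂ᵀ = I). Assume κ₂ − κ₁/γ² > 0. Then: (a) there exists ε > 0 such that κ₂ − κ₁/γ² − χ²ερ₂² > 0; and (b) for every ε > 0 satisfying κ₂ − κ₁/γ² − χ²ερ₂² > 0, the Riccati equation (R1) (with ρ = ρ₂) has a stabilising solution X if and only if both εγ²((κ₁ + κ₂)² − 4χ(κ₁ − κ₂) + 4χ²(1 − ρ₂²)) + 4(γ²κ₂ − κ₁) ≥ 0 and εγ²((κ₁ + κ₂)² + 4χ(κ₁ − κ₂) + 4χ²(1 − ρ₂²)) + 4(γ²κ₂ − κ₁) ≥ 0. -/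

import Mathlib

open Matrix Polynomial

noncomputable section

/-- A real square matrix is Hurwitz if every eigenvalue of it, regarded as a complex
matrix (i.e. every complex root of its characteristic polynomial), has negative real part. -/
def IsHurwitz {N : Type*} [Fintype N] [DecidableEq N] (M : Matrix N N ℝ) : Prop :=
  ∀ μ : ℂ, (M.map Complex.ofReal).charpoly.IsRoot μ → μ.re < 0

/-- `X` is a stabilising solution of the Riccati equation (R1). -/
def R1StabSol {n m p q s t : ℕ}
    (A : Matrix (Fin n) (Fin n) ℝ) (B₁ : Matrix (Fin n) (Fin m) ℝ)
    (B₂ : Matrix (Fin n) (Fin p) ℝ) (C₁ : Matrix (Fin q) (Fin n) ℝ)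
    (D₁ : Matrix (Fin q) (Fin m) ℝ) (H₁ : Matrix (Fin n) (Fin s) ℝ)
    (E₁ : Matrix (Fin t) (Fin n) ℝ) (γ ρ ε : ℝ)
    (X : Matrix (Fin n) (Fin n) ℝ) : Prop :=
  let G := D₁ᵀ * D₁
  let Abar := A - B₁ * G⁻¹ * D₁ᵀ * C₁
  let R := B₁ * G⁻¹ * B₁ᵀ - (ε * ρ ^ 2) • (H₁ * H₁ᵀ) - (γ ^ 2)⁻¹ • (B₂ * B₂ᵀ)
  X.IsSymm ∧
  Abarᵀ * X + X * Abar - X * R * X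
    + C₁ᵀ * (1 - D₁ * G⁻¹ * D₁ᵀ) * C₁ + ε⁻¹ • (E₁ᵀ * E₁) = 0 ∧
  IsHurwitz (Abar - R * X)

/-- `Y` is a stabilising solution of the Riccati equation (R2). -/
def R2StabSol {n p q r s t : ℕ}
    (A : Matrix (Fin n) (Fin n) ℝ) (B₂ : Matrix (Fin n) (Fin p) ℝ)
    (C₁ : Matrix (Fin q) (Fin n) ℝ) (C₂ : Matrix (Fin r) (Fin n) ℝ)
    (D₂ : Matrix (Fin r) (Fin p) ℝ) (H₁ : Matrix (Fin n) (Fin s) ℝ)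
    (E₁ : Matrix (Fin t) (Fin n) ℝ) (γ ρ ε : ℝ)
    (Y : Matrix (Fin n) (Fin n) ℝ) : Prop :=
  let Γm := D₂ * D₂ᵀ
  let Ahat := A - B₂ * D₂ᵀ * Γm⁻¹ * C₂
  let S := (γ ^ 2) • (C₂ᵀ * Γm⁻¹ * C₂) - ε⁻¹ • (E₁ᵀ * E₁) - C₁ᵀ * C₁
  Y.IsSymm ∧
  Ahat * Y + Y * Ahatᵀ - Y * S * Y
    + (γ ^ 2)⁻¹ • (B₂ * (1 - D₂ᵀ * Γm⁻¹ * D₂) * B₂ᵀ) + (ε * ρ ^ 2) • (H₁ * H₁ᵀ) = 0 ∧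
  IsHurwitz (Ahat - Y * S)

lemma isHurwitz_diagonal_fin_two (s : Fin 2 → ℝ) (h0 : s 0 < 0) (h1 : s 1 < 0) :
    IsHurwitz (Matrix.diagonal s) := by
  intro μ hμ
  have hmap : (Matrix.diagonal s).map (Complex.ofReal) =
      Matrix.diagonal (fun i => (s i : ℂ)) := by
    ext i j
    by_cases hij : i = j <;> simp [Matrix.diagonal_apply, hij]
  have hbt : (Matrix.diagonal (fun i => (s i : ℂ))).BlockTriangular id := by
    intro i j hij
    exact Matrix.diagonal_apply_ne _ (ne_of_gt hij)
  rw [hmap, Matrix.charpoly_of_upperTriangular _ hbt] at hμ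
  simp only [Fin.prod_univ_two, Polynomial.IsRoot, Polynomial.eval_mul,
    Polynomial.eval_sub, Polynomial.eval_X, Polynomial.eval_C, mul_eq_zero,
    sub_eq_zero, Matrix.diagonal_apply_eq] at hμ
  rcases hμ with h | h <;> subst h <;> simpa

lemma scalar_stab (b r e : ℝ) (hr : 0 < r) (he : 0 < e) :
    ∃ x : ℝ, b * x + x * b - x * r * x + e⁻¹ = 0 ∧ b - r * x < 0 := by
  have hd : (0:ℝ) < b ^ 2 + r / e := by positivity
  set s := Real.sqrt (b ^ 2 + r / e) with hsdef
  have hs2 : s ^ 2 = b ^ 2 + r / e := Real.sq_sqrt hd.le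
  have hspos : 0 < s := Real.sqrt_pos.mpr hd
  have hrne : r ≠ 0 := hr.ne'
  have hene : e ≠ 0 := he.ne'
  have hs2' : s ^ 2 * e = b ^ 2 * e + r := by rw [hs2]; field_simp
  refine ⟨(b + s) / r, ?_, ?_⟩
  · field_simp
    linear_combination (-1:ℝ) * hs2'
  · have : r * ((b + s) / r) = b + s := by field_simp
    rw [this]; linarith

/-- Proposition 3 (active case, `κ₂ - κ₁/γ² > 0`): existence of a suitable `ε`, and for
every such `ε` the Riccati equation (R1) has a stabilising solution iff the two stated
inequalities hold. -/
theorem stmt4 (κ₁ κ₂ χ γ ρ₂ : ℝ)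
    (hκ₁ : 0 < κ₁) (hκ₂ : 0 < κ₂) (hχ : 0 < χ) (hγ : 0 < γ) (hρ₂ : 0 < ρ₂)
    (hmain : 0 < κ₂ - κ₁ / γ ^ 2) :
    (∃ ε : ℝ, 0 < ε ∧ 0 < κ₂ - κ₁ / γ ^ 2 - χ ^ 2 * ε * ρ₂ ^ 2) ∧
    ∀ ε : ℝ, 0 < ε → 0 < κ₂ - κ₁ / γ ^ 2 - χ ^ 2 * ε * ρ₂ ^ 2 →
      ((∃ X : Matrix (Fin 2) (Fin 2) ℝ,
          R1StabSol
            (Matrix.diagonal ![-(κ₁ + κ₂) / 2 + χ, -(κ₁ + κ₂) / 2 - χ])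
            (Real.sqrt κ₂ • (1 : Matrix (Fin 2) (Fin 2) ℝ))
            (Real.sqrt κ₁ • (1 : Matrix (Fin 2) (Fin 2) ℝ))
            (Real.sqrt κ₂ • (1 : Matrix (Fin 2) (Fin 2) ℝ))
            (-1 : Matrix (Fin 2) (Fin 2) ℝ)
            (χ • (1 : Matrix (Fin 2) (Fin 2) ℝ))
            (1 : Matrix (Fin 2) (Fin 2) ℝ) γ ρ₂ ε X) ↔
        (0 ≤ ε * γ ^ 2 * ((κ₁ + κ₂) ^ 2 - 4 * χ * (κ₁ - κ₂) + 4 * χ ^ 2 * (1 - ρ₂ ^ 2))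
            + 4 * (γ ^ 2 * κ₂ - κ₁) ∧
         0 ≤ ε * γ ^ 2 * ((κ₁ + κ₂) ^ 2 + 4 * χ * (κ₁ - κ₂) + 4 * χ ^ 2 * (1 - ρ₂ ^ 2))
            + 4 * (γ ^ 2 * κ₂ - κ₁))) := by
  have hγ2 : (0:ℝ) < γ ^ 2 := by positivity
  have hkey : γ ^ 2 * (κ₁ / γ ^ 2) = κ₁ := by field_simp
  constructor
  · refine ⟨(κ₂ - κ₁ / γ ^ 2) / (2 * χ ^ 2 * ρ₂ ^ 2), by positivity, ?_⟩
    have h : χ ^ 2 * ((κ₂ - κ₁ / γ ^ 2) / (2 * χ ^ 2 * ρ₂ ^ 2)) * ρ₂ ^ 2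
        = (κ₂ - κ₁ / γ ^ 2) / 2 := by
      field_simp
    rw [h]
    linarith
  · intro ε hε hε2
    constructor
    · intro _
      constructor
      · nlinarith [mul_nonneg (mul_nonneg hε.le hγ2.le) (sq_nonneg (2*χ - κ₁ + κ₂)),
          mul_nonneg (mul_nonneg hε.le hγ2.le)
            (mul_nonneg (mul_nonneg (by norm_num : (0:ℝ) ≤ 4) hκ₁.le) hκ₂.le),
          mul_pos (by positivity : (0:ℝ) < 4 * γ ^ 2) hε2, hkey]
      · nlinarith [mul_nonneg (mul_nonneg hε.le hγ2.le) (sq_nonneg (2*χ + κ₁ - κ₂)),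
          mul_nonneg (mul_nonneg hε.le hγ2.le)
            (mul_nonneg (mul_nonneg (by norm_num : (0:ℝ) ≤ 4) hκ₁.le) hκ₂.le),
          mul_pos (by positivity : (0:ℝ) < 4 * γ ^ 2) hε2, hkey]
    · rintro ⟨-, -⟩
      have hr : 0 < κ₂ - ε * ρ₂ ^ 2 * χ ^ 2 - κ₁ / γ ^ 2 := by nlinarith [hε2]
      obtain ⟨x₁, he₁, hs₁⟩ :=
        scalar_stab ((κ₂ - κ₁)/2 + χ) (κ₂ - ε * ρ₂ ^ 2 * χ ^ 2 - κ₁ / γ ^ 2) ε hr hε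
      obtain ⟨x₂, he₂, hs₂⟩ :=
        scalar_stab ((κ₂ - κ₁)/2 - χ) (κ₂ - ε * ρ₂ ^ 2 * χ ^ 2 - κ₁ / γ ^ 2) ε hr hε
      refine ⟨Matrix.diagonal ![x₁, x₂], ?_⟩
      have hG : (((-1 : Matrix (Fin 2) (Fin 2) ℝ))ᵀ * (-1))⁻¹ = 1 := by
        rw [Matrix.transpose_neg, Matrix.transpose_one, neg_mul_neg, one_mul, inv_one]
      unfold R1StabSol
      dsimp only
      rw [hG]
      refine ⟨Matrix.isSymm_diagonal _, ?_, ?_⟩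
      · ext i j
        fin_cases i <;> fin_cases j <;>
          simp [Matrix.mul_apply, Fin.sum_univ_two, Matrix.one_apply,
            Real.mul_self_sqrt hκ₂.le, Real.mul_self_sqrt hκ₁.le, Matrix.diagonal]
        · linear_combination he₁
        · linear_combination he₂
      · have heq : Matrix.diagonal ![-(κ₁ + κ₂) / 2 + χ, -(κ₁ + κ₂) / 2 - χ]
            - Real.sqrt κ₂ • (1 : Matrix (Fin 2) (Fin 2) ℝ) * 1 * (-1 : Matrix (Fin 2) (Fin 2) ℝ)ᵀ
              * (Real.sqrt κ₂ • 1)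
            - (Real.sqrt κ₂ • (1 : Matrix (Fin 2) (Fin 2) ℝ) * 1 * (Real.sqrt κ₂ • 1)ᵀ
                - (ε * ρ₂ ^ 2) • (χ • (1 : Matrix (Fin 2) (Fin 2) ℝ) * (χ • 1)ᵀ)
                - (γ ^ 2)⁻¹ • (Real.sqrt κ₁ • (1 : Matrix (Fin 2) (Fin 2) ℝ) * (Real.sqrt κ₁ • 1)ᵀ))
              * Matrix.diagonal ![x₁, x₂]
            = Matrix.diagonal ![(κ₂ - κ₁)/2 + χ - (κ₂ - ε * ρ₂ ^ 2 * χ ^ 2 - κ₁ / γ ^ 2) * x₁,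
                (κ₂ - κ₁)/2 - χ - (κ₂ - ε * ρ₂ ^ 2 * χ ^ 2 - κ₁ / γ ^ 2) * x₂] := by
          ext i j
          fin_cases i <;> fin_cases j <;>
            simp [Matrix.mul_apply, Fin.sum_univ_two, Matrix.one_apply,
              Real.mul_self_sqrt hκ₂.le, Real.mul_self_sqrt hκ₁.le, Matrix.diagonal] <;>
            ring
        rw [heq]
        apply isHurwitz_diagonal_fin_two <;> simp <;> linarith [hs₁, hs₂]
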